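/- (Orthogonality of Krawtchouk polynomials) For all integers 0 ≤ j, k ≤ n, (1/2^n) · Σ_{i=0}^{n} C(n,i) · K_j(i;n) · K_k(i;n) = C(n,j) · δ_{jk}, where δ is the Kronecker delta. -/

import Mathlib

open Finset

/-- Integer binomial coefficient with convention C(a,b)=0 unless 0 ≤ b ≤ a. -/
def intChoose (a b : ℤ) : ℤ :=
  if 0 ≤ a ∧ 0 ≤ b then (a.toNat.choose b.toNat : ℤ) else 0

/-- Krawtchouk polynomial K_j(i;n) = Σ_{k=0}^{j} (-1)^k C(i,k) C(n-i,j-k),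
with the convention K_j(i;n)=0 if j ∉ [0,n] or i ∉ [0,n]. -/
def kraw (n : ℕ) (j i : ℤ) : ℤ :=
  ∑ k ∈ Finset.range (j.toNat + 1),
    (-1) ^ k * intChoose i k * intChoose ((n : ℤ) - i) (j - k)

lemma coeff_one_sub_X_pow (i k : ℕ) :
    ((1 - Polynomial.X : Polynomial ℚ) ^ i).coeff k = (-1) ^ k * (i.choose k : ℚ) := by
  have h : (1 - Polynomial.X : Polynomial ℚ) ^ i
      = ∑ m ∈ range (i + 1),
          Polynomial.C ((-1 : ℚ) ^ m * (i.choose m : ℚ)) * Polynomial.X ^ m := by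
    rw [sub_eq_add_neg, add_comm, add_pow]
    refine Finset.sum_congr rfl fun m hm => ?_
    rw [neg_pow]
    simp only [Polynomial.C_mul, Polynomial.C_pow, map_neg, Polynomial.C_1,
      Polynomial.C_eq_natCast]
    ring
  rw [h, Polynomial.finset_sum_coeff]
  simp only [Polynomial.coeff_C_mul, Polynomial.coeff_X_pow, mul_ite, mul_one, mul_zero]
  rw [Finset.sum_ite_eq (Finset.range (i+1)) k]
  by_cases hki : k ∈ Finset.range (i + 1)
  · simp [hki]
  · simp only [hki, if_false]
    rw [Nat.choose_eq_zero_of_lt (by simpa [Nat.lt_succ_iff, not_le] using hki)]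
    simp

lemma kraw_eq_coeff (n i j : ℕ) (hi : i ≤ n) :
    (kraw n (j : ℤ) (i : ℤ) : ℚ)
      = ((1 - Polynomial.X : Polynomial ℚ) ^ i * (1 + Polynomial.X) ^ (n - i)).coeff j := by
  rw [Polynomial.coeff_mul, Finset.Nat.sum_antidiagonal_eq_sum_range_succ_mk]
  have hk : kraw n (j : ℤ) (i : ℤ)
      = ∑ m ∈ range (j + 1), (-1 : ℤ) ^ m * (i.choose m) * ((n - i).choose (j - m)) := by
    unfold kraw intChoose
    rw [Int.toNat_natCast]
    refine Finset.sum_congr rfl fun m hm => ?_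
    have hm' : m ≤ j := Nat.lt_succ_iff.mp (Finset.mem_range.mp hm)
    rw [if_pos ⟨Int.natCast_nonneg i, Int.natCast_nonneg m⟩,
        if_pos ⟨by omega, by omega⟩]
    have h1 : ((n : ℤ) - (i : ℤ)).toNat = n - i := by omega
    have h2 : ((j : ℤ) - (m : ℤ)).toNat = j - m := by omega
    simp [h1, h2]
  rw [hk]
  push_cast
  refine Finset.sum_congr rfl fun m hm => ?_
  rw [coeff_one_sub_X_pow, Polynomial.coeff_one_add_X_pow]

noncomputable def f (n i : ℕ) : Polynomial ℚ :=
  (1 - Polynomial.X) ^ i * (1 + Polynomial.X) ^ (n - i)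

lemma key (n : ℕ) :
    ∑ i ∈ range (n + 1),
      ((f n i).map Polynomial.C) * Polynomial.C ((n.choose i : Polynomial ℚ) * f n i)
    = (2 + 2 * Polynomial.X * Polynomial.C Polynomial.X) ^ n := by
  have h : (2 + 2 * Polynomial.X * Polynomial.C Polynomial.X : Polynomial (Polynomial ℚ))
      = ((1 - Polynomial.X) * Polynomial.C (1 - Polynomial.X))
        + ((1 + Polynomial.X) * Polynomial.C (1 + Polynomial.X)) := by
    simp only [map_sub, map_add, map_one]
    ring
  rw [h, add_pow]
  refine Finset.sum_congr rfl fun i hi => ?_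
  unfold f
  simp only [Polynomial.map_mul, Polynomial.map_pow, Polynomial.map_sub, Polynomial.map_add,
    Polynomial.map_one, Polynomial.map_X, map_mul, map_pow, map_sub, map_add, map_one,
    mul_pow, Polynomial.C_eq_natCast]
  ring

lemma coeff_rhs (n j k : ℕ) (hj : j ≤ n) :
    (((2 + 2 * Polynomial.X * Polynomial.C Polynomial.X : Polynomial (Polynomial ℚ)) ^ n).coeff
        j).coeff k
      = 2 ^ n * (n.choose j : ℚ) * (if j = k then 1 else 0) := by
  have e0 : (2 + 2 * Polynomial.X * Polynomial.C Polynomial.X : Polynomial (Polynomial ℚ))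
      = Polynomial.C (2 : Polynomial ℚ) * (1 + Polynomial.X * Polynomial.C Polynomial.X) := by
    simp only [map_ofNat]
    ring
  rw [e0, mul_pow, ← Polynomial.C_pow, add_comm (1 : Polynomial (Polynomial ℚ)), add_pow]
  rw [Finset.mul_sum, Polynomial.finset_sum_coeff]
  have e1 : ∀ m ∈ range (n + 1),
      ((Polynomial.C ((2 : Polynomial ℚ) ^ n) *
        ((Polynomial.X * Polynomial.C Polynomial.X) ^ m * 1 ^ (n - m) *
          (n.choose m : Polynomial (Polynomial ℚ)))).coeff j)
      = if j = m then (2 : Polynomial ℚ) ^ n * (n.choose m : Polynomial ℚ) * Polynomial.X ^ m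
        else 0 := by
    intro m hm
    rw [one_pow, mul_one, mul_pow, ← Polynomial.C_pow]
    have hc : (n.choose m : Polynomial (Polynomial ℚ))
        = Polynomial.C (n.choose m : Polynomial ℚ) := by simp
    rw [hc, show Polynomial.C ((2 : Polynomial ℚ) ^ n) *
        (Polynomial.X ^ m * Polynomial.C (Polynomial.X ^ m) *
          Polynomial.C (n.choose m : Polynomial ℚ))
      = Polynomial.X ^ m *
          Polynomial.C ((2 : Polynomial ℚ) ^ n * (n.choose m : Polynomial ℚ) * Polynomial.X ^ m) by
        simp only [map_mul]; ring]
    rw [Polynomial.coeff_mul_C, Polynomial.coeff_X_pow]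
    simp [ite_mul]
  rw [Finset.sum_congr rfl e1, Finset.sum_ite_eq (range (n + 1)) j]
  rw [if_pos (Finset.mem_range.mpr (Nat.lt_succ_of_le hj))]
  have h2 : ((2 : Polynomial ℚ) ^ n * (n.choose j : Polynomial ℚ))
      = Polynomial.C ((2 : ℚ) ^ n * (n.choose j : ℚ)) := by
    simp only [map_mul, map_pow, map_ofNat, Polynomial.C_eq_natCast]
  rw [h2, Polynomial.coeff_C_mul, Polynomial.coeff_X_pow]
  push_cast
  rw [show ((if k = j then (1:ℚ) else 0)) = (if j = k then (1:ℚ) else 0) by simp [eq_comm]]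

/-- Orthogonality of the Krawtchouk polynomials:
(1/2^n) Σ_{i=0}^{n} C(n,i) K_j(i;n) K_k(i;n) = C(n,j) δ_{jk}. -/
theorem krawtchouk_orthogonality (n j k : ℕ) (hj : j ≤ n) (hk : k ≤ n) :
    (1 / 2 ^ n : ℚ) *
      ∑ i ∈ Finset.range (n + 1),
        (n.choose i : ℚ) * (kraw n j i : ℚ) * (kraw n k i : ℚ) =
      (n.choose j : ℚ) * (if j = k then 1 else 0) := by
  have hterm : ∀ i ∈ range (n + 1),
      (n.choose i : ℚ) * (kraw n j i : ℚ) * (kraw n k i : ℚ)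
        = ((((f n i).map Polynomial.C)
            * Polynomial.C ((n.choose i : Polynomial ℚ) * f n i)).coeff j).coeff k := by
    intro i hi
    have hi' : i ≤ n := Nat.lt_succ_iff.mp (Finset.mem_range.mp hi)
    rw [Polynomial.coeff_mul_C, Polynomial.coeff_map, Polynomial.coeff_C_mul,
      show ((n.choose i : Polynomial ℚ)) = Polynomial.C (n.choose i : ℚ) by simp,
      Polynomial.coeff_C_mul]
    unfold f
    rw [← kraw_eq_coeff n i j hi', ← kraw_eq_coeff n i k hi']
    ring
  rw [Finset.sum_congr rfl hterm, ← Polynomial.finset_sum_coeff,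
    ← Polynomial.finset_sum_coeff, key n, coeff_rhs n j k hj]
  have h2n : (2 : ℚ) ^ n ≠ 0 := by positivity
  field_simp
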